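/- Let d ≥ 1 and k = d+1. Let φ : [1,∞) → [1,∞) be non-decreasing, let L : [φ(1),∞) → [1,∞) satisfy L(x)·φ(L(x)) = x for all x ≥ φ(1), and let Λ = Aℤ^k be a unimodular lattice in ℝ^k such that every nonzero (λ,λ_k) ∈ Λ* = (A^{−1})ᵀℤ^k (with λ ∈ ℝ^d) satisfies H(λ)·|λ_k| > 1/φ(H(λ)). Let ρ ∈ (0,1/2)^d and let N ≥ φ(1) be a real number with ρ₁⋯ρ_d·N > φ(L(N)). Then there is no point (λ,λ_k) ∈ Λ* with λ ≠ 0, |λᵢ| ≤ ρᵢ^{−1} for all i ≤ d, and |λ_k| ≤ N^{−1}. -/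

import Mathlib

open scoped BigOperators

/-- The Fourier transform `∫ w(x) e^{-2πiξx} dx` of a real weight function. -/
noncomputable def fhat (w : ℝ → ℝ) (ξ : ℝ) : ℂ :=
  ∫ x : ℝ, (w x : ℂ) * Complex.exp (-(2 * Real.pi * Complex.I * ξ * x))

/-- The class 𝒢_{k,ℓ} of good weight tuples. -/
def GoodWeights (k ℓ : ℕ) (w : Fin k → ℝ → ℝ) : Prop :=
  ∀ i : Fin k,
    (∀ x, 0 ≤ w i x) ∧
    (Function.support (w i) ⊆ Set.Icc (-2 : ℝ) 2) ∧
    ContDiff ℝ ℓ (w i) ∧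
    (∀ ξ : ℝ, (fhat (w i) ξ).im = 0 ∧ 0 ≤ (fhat (w i) ξ).re) ∧
    0 < (fhat (w i) 0).re

/-- Multiplicative height `H(m) = ∏ max(1,|mᵢ|)`. -/
noncomputable def Hmul {d : ℕ} (m : Fin d → ℝ) : ℝ := ∏ i, max 1 |m i|

/-- Distance from `x` to the nearest integer. -/
noncomputable def distInt (x : ℝ) : ℝ := |x - (round x : ℝ)|

/-- The constant 𝔠(ω) = ω̂₁(0)⋯ω̂_k(0). -/
noncomputable def smoothC {k : ℕ} (w : Fin k → ℝ → ℝ) : ℝ := ∏ i, (fhat (w i) 0).re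

/-- Smooth discrepancy of the Kronecker sequence of α in the box (γ; ρ) at scale N. -/
noncomputable def Dbox (d : ℕ) (w : Fin (d+1) → ℝ → ℝ) (α γ ρ : Fin d → ℝ) (N : ℝ) : ℝ :=
  (∑' p : (Fin d → ℤ) × ℤ,
      w (Fin.last d) ((p.2 : ℝ) / N) *
        ∏ i : Fin d, w i.castSucc (((p.1 i : ℝ) + (p.2 : ℝ) * α i - γ i) / ρ i))
    - smoothC w * ((∏ i, ρ i) * N)

/-- The point of the lattice `A ℤ^k` indexed by the integer vector `a`. -/
noncomputable def latPt {k : ℕ} (A : Matrix (Fin k) (Fin k) ℝ) (a : Fin k → ℤ) : Fin k → ℝ :=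
  A.mulVec (fun i => (a i : ℝ))

/-- The point of the dual lattice `(A⁻¹)ᵀ ℤ^k` indexed by the integer vector `a`. -/
noncomputable def dualPt {k : ℕ} (A : Matrix (Fin k) (Fin k) ℝ) (a : Fin k → ℤ) : Fin k → ℝ :=
  (A⁻¹).transpose.mulVec (fun i => (a i : ℝ))

/-- Smooth lattice discrepancy of the lattice `A ℤ^{d+1}` in the box (γ; ρ) at scale N. -/
noncomputable def DboxLat (d : ℕ) (A : Matrix (Fin (d+1)) (Fin (d+1)) ℝ)
    (w : Fin (d+1) → ℝ → ℝ) (γ ρ : Fin d → ℝ) (N : ℝ) : ℝ :=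
  (∑' a : Fin (d+1) → ℤ,
      w (Fin.last d) (latPt A a (Fin.last d) / N) *
        ∏ i : Fin d, w i.castSucc ((latPt A a i.castSucc - γ i) / ρ i))
    - smoothC w * ((∏ i, ρ i) * N)

/-- Side-length vector of a test box: each ρᵢ ∈ (0, 1/2). -/
def IsBox {d : ℕ} (ρ : Fin d → ℝ) : Prop := ∀ i, 0 < ρ i ∧ ρ i < 1/2

/-- Every nonzero dual lattice point (λ, λ_k) satisfies H(λ)·|λ_k| > 1/φ(H(λ)). -/
def DualBad (d : ℕ) (A : Matrix (Fin (d+1)) (Fin (d+1)) ℝ) (φ : ℝ → ℝ) : Prop :=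
  ∀ a : Fin (d+1) → ℤ, dualPt A a ≠ 0 →
    Hmul (fun i : Fin d => dualPt A a i.castSucc) * |dualPt A a (Fin.last d)| >
      1 / φ (Hmul (fun i : Fin d => dualPt A a i.castSucc))

/-- The uncertainty regime 𝒰 is empty for boxes of large volume. -/
theorem uncertainty_regime_empty
    (d : ℕ) (hd : 1 ≤ d) (φ L : ℝ → ℝ)
    (hφmap : ∀ x, 1 ≤ x → 1 ≤ φ x)
    (hφmono : ∀ x y, 1 ≤ x → x ≤ y → φ x ≤ φ y)
    (hLmap : ∀ x, φ 1 ≤ x → 1 ≤ L x)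
    (hLdef : ∀ x, φ 1 ≤ x → L x * φ (L x) = x)
    (A : Matrix (Fin (d+1)) (Fin (d+1)) ℝ) (hdet : |A.det| = 1)
    (hbad : DualBad d A φ)
    (ρ : Fin d → ℝ) (hρ : IsBox ρ) (N : ℝ) (hN : φ 1 ≤ N)
    (hvol : φ (L N) < (∏ i, ρ i) * N) :
    ¬ ∃ a : Fin (d+1) → ℤ,
        (fun i : Fin d => dualPt A a i.castSucc) ≠ 0 ∧
        (∀ i : Fin d, |dualPt A a i.castSucc| ≤ (ρ i)⁻¹) ∧
        |dualPt A a (Fin.last d)| ≤ N⁻¹ := by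
  rintro ⟨a, hne, hbound, hlast⟩
  set lam : Fin d → ℝ := fun i => dualPt A a i.castSucc with hlam
  set H : ℝ := Hmul lam with hH
  have h1 : (1:ℝ) ≤ H := by
    rw [hH, Hmul]
    calc (1:ℝ) = ∏ _i : Fin d, (1:ℝ) := by simp
      _ ≤ ∏ i, max 1 |lam i| :=
          Finset.prod_le_prod (fun _ _ => zero_le_one) (fun i _ => le_max_left _ _)
  have hNpos : (0:ℝ) < N := lt_of_lt_of_le one_pos (le_trans (hφmap 1 le_rfl) hN)
  have hρpos : (0:ℝ) < ∏ i, ρ i := Finset.prod_pos fun i _ => (hρ i).1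
  have hLN : (1:ℝ) ≤ L N := hLmap N hN
  have hφLN : (1:ℝ) ≤ φ (L N) := hφmap _ hLN
  have hHle : H ≤ (∏ i, ρ i)⁻¹ := by
    rw [hH, Hmul, ← Finset.prod_inv_distrib]
    refine Finset.prod_le_prod (fun i _ => le_trans zero_le_one (le_max_left _ _)) ?_
    intro i _
    refine max_le ?_ ?_
    · have h0 := (hρ i).1
      have h2 : ρ i ≤ 1 := by linarith [(hρ i).2]
      simpa using inv_anti₀ h0 h2
    · exact hbound i
  have hinv : (∏ i, ρ i)⁻¹ < L N := by
    have hφLNpos : (0:ℝ) < φ (L N) := lt_of_lt_of_le one_pos hφLN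
    have hLNeq : L N = N / φ (L N) := by
      field_simp
      linarith [hLdef N hN]
    have hstep : (∏ i, ρ i)⁻¹ * φ (L N) < N := by
      rw [inv_mul_lt_iff₀ hρpos]
      linarith [hvol]
    rw [hLNeq]
    exact (lt_div_iff₀ hφLNpos).mpr hstep
  have hHlt : H < L N := lt_of_le_of_lt hHle hinv
  have hφH : φ H ≤ φ (L N) := hφmono H (L N) h1 (le_of_lt hHlt)
  have hφHpos : (0:ℝ) < φ H := lt_of_lt_of_le one_pos (hφmap H h1)
  have hmul : H * φ H < N := by
    calc H * φ H < L N * φ (L N) :=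
          mul_lt_mul hHlt hφH hφHpos (le_trans zero_le_one hLN)
      _ = N := hLdef N hN
  have hne' : dualPt A a ≠ 0 := by
    intro h0
    apply hne
    funext i
    simp [hlam, h0]
  have hb := hbad a hne'
  have hb' : H * |dualPt A a (Fin.last d)| > 1 / φ H := hb
  have hlkpos : (0:ℝ) < |dualPt A a (Fin.last d)| := by
    by_contra hc
    push_neg at hc
    have : |dualPt A a (Fin.last d)| = 0 := le_antisymm hc (abs_nonneg _)
    rw [this, mul_zero] at hb'
    have : (0:ℝ) < 1 / φ H := by positivity
    linarith
  have hNinv : |dualPt A a (Fin.last d)| * N ≤ 1 := by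
    have := hlast
    calc |dualPt A a (Fin.last d)| * N ≤ N⁻¹ * N :=
          mul_le_mul_of_nonneg_right hlast (le_of_lt hNpos)
      _ = 1 := inv_mul_cancel₀ (ne_of_gt hNpos)
  have key : N < H * φ H := by
    have h2 : 1 < H * |dualPt A a (Fin.last d)| * φ H := by
      have := (div_lt_iff₀ hφHpos).mp hb'
      linarith
    nlinarith [hlkpos, hNpos, h1, hφHpos]
  linarith
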